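/- Let D be a finite multiset of tuples with attribute maps A_ft : tuple → U and A_j : tuple → K, and let B_1,…,B_m be pairwise disjoint sets covering U. For each ℓ, let D^ℓ = {t ∈ D : A_ft(t) ∈ B_ℓ}, and let mf_ℓ be a natural number bounding, for every key k ∈ K, the multiplicity of k among the A_j-keys of D^ℓ; similarly let mf_D bound the max frequency of A_j over all of D. Then for every vals ⊆ U, writing D′ = {t ∈ D : A_ft(t) ∈ vals}, the max frequency of A_j over D′ is at most min( ∑_{ℓ : B_ℓ ∩ vals ≠ ∅} mf_ℓ , mf_D ). -/

import Mathlib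

open scoped Classical

private lemma card_eq_sum_filter_bins
    {τ U : Type*} (Aft : τ → U) (m : ℕ) (B : Fin m → Set U)
    (hdisj : ∀ i j, i ≠ j → Disjoint (B i) (B j))
    (hcover : (⋃ i, B i) = Set.univ) (M : Multiset τ) :
    M.card = ∑ ℓ : Fin m, (M.filter (fun t => Aft t ∈ B ℓ)).card := by
  induction M using Multiset.induction with
  | empty => simp
  | cons a M ih =>
    have hmem : Aft a ∈ ⋃ i, B i := by rw [hcover]; trivial
    obtain ⟨i, hi⟩ := Set.mem_iUnion.mp hmem
    have : ∀ ℓ : Fin m, ((a ::ₘ M).filter (fun t => Aft t ∈ B ℓ)).card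
        = (M.filter (fun t => Aft t ∈ B ℓ)).card + (if ℓ = i then 1 else 0) := by
      intro ℓ
      by_cases h : ℓ = i
      · subst h
        simp [Multiset.filter_cons, hi]
      · have hna : Aft a ∉ B ℓ := fun hx =>
          (hdisj ℓ i h).ne_of_mem hx hi rfl
        simp [Multiset.filter_cons, hna, h]
    simp only [this, Finset.sum_add_distrib, Finset.sum_ite_eq', Finset.mem_univ, if_true]
    rw [Multiset.card_cons, ih]

theorem mf_after_selection_bound
    {τ U K : Type*}
    (D : Multiset τ) (Aft : τ → U) (Aj : τ → K)
    (m : ℕ) (B : Fin m → Set U)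
    (hdisj : ∀ i j, i ≠ j → Disjoint (B i) (B j))
    (hcover : (⋃ i, B i) = Set.univ)
    (mf : Fin m → ℕ) (mfD : ℕ)
    (hmf : ∀ (ℓ : Fin m) (k : K),
      ((D.filter (fun t => Aft t ∈ B ℓ)).filter (fun t => Aj t = k)).card ≤ mf ℓ)
    (hmfD : ∀ k : K, (D.filter (fun t => Aj t = k)).card ≤ mfD) :
    ∀ (vals : Set U) (k : K),
      ((D.filter (fun t => Aft t ∈ vals)).filter (fun t => Aj t = k)).card ≤
        min (∑ ℓ ∈ Finset.univ.filter (fun ℓ => (B ℓ ∩ vals).Nonempty), mf ℓ) mfD := by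
  intro vals k
  set M := (D.filter (fun t => Aft t ∈ vals)).filter (fun t => Aj t = k) with hM
  refine le_min ?_ ?_
  · rw [card_eq_sum_filter_bins Aft m B hdisj hcover M]
    have hterm : ∀ ℓ : Fin m, (M.filter (fun t => Aft t ∈ B ℓ)).card ≤
        if (B ℓ ∩ vals).Nonempty then mf ℓ else 0 := by
      intro ℓ
      by_cases h : (B ℓ ∩ vals).Nonempty
      · simp only [h, if_true]
        refine le_trans (Multiset.card_le_card ?_) (hmf ℓ k)
        rw [hM, Multiset.filter_comm]
        exact Multiset.filter_le_filter _
          (Multiset.filter_le_filter _ (Multiset.filter_le _ _))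
      · simp only [h, if_false, Nat.le_zero, Multiset.card_eq_zero]
        rw [Multiset.filter_eq_nil]
        intro t ht htB
        rcases Multiset.mem_filter.mp ht with ⟨ht1, _⟩
        rcases Multiset.mem_filter.mp ht1 with ⟨_, htv⟩
        exact h ⟨Aft t, htB, htv⟩
    calc ∑ ℓ : Fin m, (M.filter (fun t => Aft t ∈ B ℓ)).card
        ≤ ∑ ℓ : Fin m, if (B ℓ ∩ vals).Nonempty then mf ℓ else 0 :=
          Finset.sum_le_sum (fun ℓ _ => hterm ℓ)
      _ = ∑ ℓ ∈ Finset.univ.filter (fun ℓ => (B ℓ ∩ vals).Nonempty), mf ℓ := by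
          rw [Finset.sum_filter]
  · refine le_trans (Multiset.card_le_card ?_) (hmfD k)
    rw [hM]
    exact Multiset.filter_le_filter _ (Multiset.filter_le _ _)
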